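/- Let η ∈ ℝ, let F : ℝ³ → ℝ³ be the Baiti–Jenssen flux with parameter η, and for U = (u,v,w) ∈ ℝ³ let J(U) denote the 3×3 real matrix whose (i,j) entry is the partial derivative of the i-th component of F with respect to the j-th variable at U (the Jacobian matrix of F at U). Then the characteristic polynomial of J(U) equals (X − λ₁(U)) (X − λ₂(U)) (X − λ₃(U)), where λ₁(u,v,w) = 2η(w − (v−2)u) − 4, λ₂(u,v,w) = 2v, λ₃(u,v,w) = 2η(w − vu) + 4. In particular λ₂(U) = 2v is an eigenvalue of J(U). -/

import Mathlib

open Polynomial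

/-- The Baiti–Jenssen flux with parameter `η`. -/
noncomputable def BJflux (η : ℝ) : ℝ × ℝ × ℝ → ℝ × ℝ × ℝ :=
  fun U =>
    (4 * ((U.2.1 - 1) * U.1 - U.2.2) + 2 * η * (U.1 * U.2.2 - U.1 ^ 2 * (U.2.1 - 1)),
     U.2.1 ^ 2,
     4 * (U.2.1 * (U.2.1 - 2) * U.1 - (U.2.1 - 1) * U.2.2)
       + η * (U.2.2 ^ 2 - U.1 ^ 2 * (U.2.1 - 2) * U.2.1))

/-- The components of a vector of `ℝ × ℝ × ℝ`, indexed by `Fin 3`. -/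
def comp3 (U : ℝ × ℝ × ℝ) : Fin 3 → ℝ := ![U.1, U.2.1, U.2.2]

/-- The standard basis vectors of `ℝ × ℝ × ℝ`, indexed by `Fin 3`. -/
def basis3 : Fin 3 → ℝ × ℝ × ℝ := ![(1, 0, 0), (0, 1, 0), (0, 0, 1)]

/-- The Jacobian matrix of the Baiti–Jenssen flux at a point `U`: its `(i,j)` entry is
the partial derivative of the `i`-th component of the flux with respect to the `j`-th
variable at `U`. -/
noncomputable def BJjacobian (η : ℝ) (U : ℝ × ℝ × ℝ) : Matrix (Fin 3) (Fin 3) ℝ :=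
  Matrix.of fun i j => fderiv ℝ (fun X => comp3 (BJflux η X) i) U (basis3 j)

lemma deriv_eq_of_quad (f : ℝ → ℝ) (a b c : ℝ)
    (h : f = fun t => a + b * t + c * t ^ 2) : deriv f 0 = b := by
  subst h
  have h1 := (((hasDerivAt_id (0:ℝ)).const_mul b).add ((hasDerivAt_pow 2 (0:ℝ)).const_mul c)).const_add a
  simp only [id] at h1
  have h2 : HasDerivAt (fun t : ℝ => a + b * t + c * t ^ 2) (b * 1 + c * (2 * 0 ^ (2-1))) 0 := by
    rw [show (fun t : ℝ => a + b * t + c * t ^ 2) = fun x => a + (((fun y => b * y) + fun y => c * y ^ 2 : ℝ → ℝ) x) from funext fun t => by simp only [Pi.add_apply]; ring]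
    exact h1.congr_deriv (by norm_num)
  simpa using h2.deriv

lemma fderiv_dir (f : ℝ × ℝ × ℝ → ℝ) (U e : ℝ × ℝ × ℝ) (hf : DifferentiableAt ℝ f U) :
    fderiv ℝ f U e = deriv (fun t : ℝ => f (U + t • e)) 0 := by
  have hline : HasDerivAt (fun t : ℝ => U + t • e) e 0 := by
    simpa using ((hasDerivAt_id (0:ℝ)).smul_const e).const_add U
  have hf' : HasFDerivAt f (fderiv ℝ f U) ((fun t : ℝ => U + t • e) 0) := by
    simpa using hf.hasFDerivAt
  exact ((hf'.comp_hasDerivAt 0 hline).deriv).symm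

lemma BJjacobian_eq (η u v w : ℝ) :
    BJjacobian η (u, v, w) =
      !![4*(v-1) + 2*η*(w - 2*u*(v-1)), 4*u - 2*η*u^2, -4 + 2*η*u;
         0, 2*v, 0;
         4*v*(v-2) - 2*η*u*(v-2)*v, 4*((2*v-2)*u - w) - η*u^2*(2*v-2), -4*(v-1) + 2*η*w] := by
  have hd0 : DifferentiableAt ℝ (fun X : ℝ × ℝ × ℝ => comp3 (BJflux η X) 0) (u, v, w) := by
    simp only [comp3, BJflux, Matrix.cons_val_zero]; fun_prop
  have hd1 : DifferentiableAt ℝ (fun X : ℝ × ℝ × ℝ => comp3 (BJflux η X) 1) (u, v, w) := by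
    simp only [comp3, BJflux, Matrix.cons_val_one, Matrix.cons_val_zero, Matrix.head_cons]; fun_prop
  have hd2 : DifferentiableAt ℝ (fun X : ℝ × ℝ × ℝ => comp3 (BJflux η X) 2) (u, v, w) := by
    simp only [comp3, BJflux, Matrix.cons_val_two, Matrix.tail_cons, Matrix.head_cons]; fun_prop
  have hd : ∀ i : Fin 3, DifferentiableAt ℝ (fun X : ℝ × ℝ × ℝ => comp3 (BJflux η X) i) (u, v, w) := by
    intro i; fin_cases i; exacts [hd0, hd1, hd2]
  have h00 : fderiv ℝ (fun X => comp3 (BJflux η X) 0) (u, v, w) (basis3 0) = 4*(v-1) + 2*η*(w - 2*u*(v-1)) := by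
    rw [fderiv_dir _ _ _ (hd 0), deriv_eq_of_quad _ (4*((v-1)*u - w) + 2*η*(u*w - u^2*(v-1))) (4*(v-1) + 2*η*(w - 2*u*(v-1))) (-2*η*(v-1))
      (funext fun t => by (simp [comp3, BJflux, basis3]) <;> ring)]
  have h01 : fderiv ℝ (fun X => comp3 (BJflux η X) 0) (u, v, w) (basis3 1) = 4*u - 2*η*u^2 := by
    rw [fderiv_dir _ _ _ (hd 0), deriv_eq_of_quad _ (4*((v-1)*u - w) + 2*η*(u*w - u^2*(v-1))) (4*u - 2*η*u^2) (0)
      (funext fun t => by (simp [comp3, BJflux, basis3]) <;> ring)]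
  have h02 : fderiv ℝ (fun X => comp3 (BJflux η X) 0) (u, v, w) (basis3 2) = -4 + 2*η*u := by
    rw [fderiv_dir _ _ _ (hd 0), deriv_eq_of_quad _ (4*((v-1)*u - w) + 2*η*(u*w - u^2*(v-1))) (-4 + 2*η*u) (0)
      (funext fun t => by (simp [comp3, BJflux, basis3]) <;> ring)]
  have h10 : fderiv ℝ (fun X => comp3 (BJflux η X) 1) (u, v, w) (basis3 0) = 0 := by
    rw [fderiv_dir _ _ _ (hd 1), deriv_eq_of_quad _ (v^2) (0) (0)
      (funext fun t => by (simp [comp3, BJflux, basis3]) <;> ring)]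
  have h11 : fderiv ℝ (fun X => comp3 (BJflux η X) 1) (u, v, w) (basis3 1) = 2*v := by
    rw [fderiv_dir _ _ _ (hd 1), deriv_eq_of_quad _ (v^2) (2*v) (1)
      (funext fun t => by (simp [comp3, BJflux, basis3]) <;> ring)]
  have h12 : fderiv ℝ (fun X => comp3 (BJflux η X) 1) (u, v, w) (basis3 2) = 0 := by
    rw [fderiv_dir _ _ _ (hd 1), deriv_eq_of_quad _ (v^2) (0) (0)
      (funext fun t => by (simp [comp3, BJflux, basis3]) <;> ring)]
  have h20 : fderiv ℝ (fun X => comp3 (BJflux η X) 2) (u, v, w) (basis3 0) = 4*v*(v-2) - 2*η*u*(v-2)*v := by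
    rw [fderiv_dir _ _ _ (hd 2), deriv_eq_of_quad _ (4*(v*(v-2)*u - (v-1)*w) + η*(w^2 - u^2*(v-2)*v)) (4*v*(v-2) - 2*η*u*(v-2)*v) (-η*(v-2)*v)
      (funext fun t => by (simp [comp3, BJflux, basis3]) <;> ring)]
  have h21 : fderiv ℝ (fun X => comp3 (BJflux η X) 2) (u, v, w) (basis3 1) = 4*((2*v-2)*u - w) - η*u^2*(2*v-2) := by
    rw [fderiv_dir _ _ _ (hd 2), deriv_eq_of_quad _ (4*(v*(v-2)*u - (v-1)*w) + η*(w^2 - u^2*(v-2)*v)) (4*((2*v-2)*u - w) - η*u^2*(2*v-2)) (4*u - η*u^2)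
      (funext fun t => by (simp [comp3, BJflux, basis3]) <;> ring)]
  have h22 : fderiv ℝ (fun X => comp3 (BJflux η X) 2) (u, v, w) (basis3 2) = -4*(v-1) + 2*η*w := by
    rw [fderiv_dir _ _ _ (hd 2), deriv_eq_of_quad _ (4*(v*(v-2)*u - (v-1)*w) + η*(w^2 - u^2*(v-2)*v)) (-4*(v-1) + 2*η*w) (η)
      (funext fun t => by (simp [comp3, BJflux, basis3]) <;> ring)]
  ext i j
  fin_cases i <;> fin_cases j
  exacts [h00, h01, h02, h10, h11, h12, h20, h21, h22]

theorem bj_charpoly (η : ℝ) (u v w : ℝ) :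
    (BJjacobian η (u, v, w)).charpoly =
      (X - C (2 * η * (w - (v - 2) * u) - 4)) * (X - C (2 * v))
        * (X - C (2 * η * (w - v * u) + 4)) ∧
    ∃ x : Fin 3 → ℝ, x ≠ 0 ∧ (BJjacobian η (u, v, w)).mulVec x = (2 * v) • x := by
  rw [BJjacobian_eq]
  set M : Matrix (Fin 3) (Fin 3) ℝ :=
      !![4*(v-1) + 2*η*(w - 2*u*(v-1)), 4*u - 2*η*u^2, -4 + 2*η*u;
         0, 2*v, 0;
         4*v*(v-2) - 2*η*u*(v-2)*v, 4*((2*v-2)*u - w) - η*u^2*(2*v-2), -4*(v-1) + 2*η*w]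
    with hM
  constructor
  · rw [Matrix.charpoly, Matrix.det_fin_three]
    simp [hM, Matrix.charmatrix_apply, Matrix.diagonal_apply]
    simp only [map_add, map_sub, map_mul, map_pow, map_ofNat, map_one, map_neg, map_zero]
    ring
  · have hdet : (M - (2 * v) • 1).det = 0 := by
      rw [Matrix.det_fin_three]
      simp [hM, Matrix.smul_apply, Matrix.one_apply]

    obtain ⟨x, hx0, hx⟩ := (Matrix.exists_mulVec_eq_zero_iff).2 hdet
    refine ⟨x, hx0, ?_⟩
    rw [Matrix.sub_mulVec, Matrix.smul_mulVec, Matrix.one_mulVec] at hx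
    exact sub_eq_zero.mp hx
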